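/- For a pure bipartite state |φ⟩^{AB}, the one-way distillable common randomness quantity D¹_→(φ^{AB}) = max_Λ I(X;B) over rank-1 POVMs Λ on A equals the entanglement entropy H(A)_φ. -/

import Mathlib

open Matrix Kronecker BigOperators ComplexOrder

/-- Trace norm `‖A‖₁ = Tr √(Aᴴ A)`. -/
noncomputable def traceNorm {n : Type*} [Fintype n] [DecidableEq n]
    (A : Matrix n n ℂ) : ℝ :=
  (((Matrix.posSemidef_conjTranspose_mul_self A).1.eigenvectorUnitary.1 *
      diagonal (((↑) : ℝ → ℂ) ∘ Real.sqrt ∘ (Matrix.posSemidef_conjTranspose_mul_self A).1.eigenvalues) *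
      (star (Matrix.posSemidef_conjTranspose_mul_self A).1.eigenvectorUnitary : Matrix n n ℂ)).trace).re

/-- Von Neumann entropy (base 2), via eigenvalues; `0` for non-Hermitian input. -/
noncomputable def vnEntropy {n : Type*} [Fintype n] [DecidableEq n]
    (ρ : Matrix n n ℂ) : ℝ :=
  if h : ρ.IsHermitian then
    -∑ i, (h.eigenvalues i) * Real.logb 2 (h.eigenvalues i)
  else 0

/-- A density operator: positive semidefinite with unit trace. -/
def IsDensity {n : Type*} [Fintype n] (ρ : Matrix n n ℂ) : Prop :=
  ρ.PosSemidef ∧ ρ.trace = 1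

/-- Rank-one projector `|v⟩⟨v|`. -/
noncomputable def proj {n : Type*} (v : n → ℂ) : Matrix n n ℂ :=
  Matrix.vecMulVec v (star v)

/-- Partial trace over the second tensor factor. -/
noncomputable def ptraceSnd {a b : Type*} [Fintype b]
    (ρ : Matrix (a × b) (a × b) ℂ) : Matrix a a ℂ :=
  Matrix.of fun i j => ∑ k, ρ (i, k) (j, k)

/-- Partial trace over the first tensor factor. -/
noncomputable def ptraceFst {a b : Type*} [Fintype a]
    (ρ : Matrix (a × b) (a × b) ℂ) : Matrix b b ℂ :=
  Matrix.of fun i j => ∑ k, ρ (k, i) (k, j)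

/-- Quantum mutual information `I(A;B) = H(A) + H(B) − H(AB)`. -/
noncomputable def mutualInfo {a b : Type*} [Fintype a] [Fintype b]
    [DecidableEq a] [DecidableEq b] (ρ : Matrix (a × b) (a × b) ℂ) : ℝ :=
  vnEntropy (ptraceSnd ρ) + vnEntropy (ptraceFst ρ) - vnEntropy ρ

/-- `n`-fold tensor power of a matrix. -/
noncomputable def tpow {d : ℕ} (ρ : Matrix (Fin d) (Fin d) ℂ) (n : ℕ) :
    Matrix (Fin n → Fin d) (Fin n → Fin d) ℂ :=
  Matrix.of fun f g => ∏ i, ρ (f i) (g i)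

/-- The cq state obtained by measuring the `A` part of a bipartite state with POVM `Λ`:
`ρ^{XB} = Σ_x |x⟩⟨x| ⊗ Tr_A((Λ_x ⊗ I)ρ)`. -/
noncomputable def measureA {a b m : Type*} [Fintype a] [DecidableEq m]
    (Λ : m → Matrix a a ℂ) (ρ : Matrix (a × b) (a × b) ℂ) :
    Matrix (m × b) (m × b) ℂ :=
  Matrix.of fun xi yj =>
    if xi.1 = yj.1 then ∑ k, ∑ l, (Λ xi.1) k l * ρ (l, xi.2) (k, yj.2) else 0

/-- Unitarity for (possibly rectangular between index types) matrices. -/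
def IsUnitaryMat {p q : Type*} [Fintype p] [Fintype q] [DecidableEq p] [DecidableEq q]
    (U : Matrix p q ℂ) : Prop :=
  U * Uᴴ = 1 ∧ Uᴴ * U = 1

open Polynomial

noncomputable def entS (p : Polynomial ℂ) : ℝ :=
  -((p.roots.map (fun z : ℂ => z.re * Real.logb 2 z.re)).sum)

lemma eval_charpoly' {n : Type*} [Fintype n] [DecidableEq n]
    (M : Matrix n n ℂ) (z : ℂ) :
    M.charpoly.eval z = (z • (1 : Matrix n n ℂ) - M).det := by
  rw [Matrix.charpoly, ← Polynomial.coe_evalRingHom, RingHom.map_det]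
  congr 1
  ext i j
  by_cases h : i = j <;>
    simp [h, Matrix.charmatrix_apply, Matrix.one_apply, Matrix.diagonal_apply]

lemma entS_X_pow_mul (k : ℕ) {p : Polynomial ℂ} (hp : p ≠ 0) :
    entS (Polynomial.X ^ k * p) = entS p := by
  unfold entS
  rw [Polynomial.roots_mul (mul_ne_zero (pow_ne_zero _ Polynomial.X_ne_zero) hp),
    Polynomial.roots_pow, Polynomial.roots_X, Multiset.map_add, Multiset.sum_add]
  simp [Multiset.map_nsmul, Multiset.nsmul_singleton, Multiset.sum_replicate]

lemma charpoly_transpose' {n : Type*} [Fintype n] [DecidableEq n] (M : Matrix n n ℂ) :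
    (Mᵀ).charpoly = M.charpoly := by
  apply Polynomial.funext; intro z
  rw [eval_charpoly', eval_charpoly', ← Matrix.det_transpose (z • 1 - M),
    Matrix.transpose_sub, Matrix.transpose_smul, Matrix.transpose_one]

lemma charpoly_swap {p q : Type*} [Fintype p] [Fintype q] [DecidableEq p] [DecidableEq q]
    (A : Matrix p q ℂ) (B : Matrix q p ℂ) :
    Polynomial.X ^ (Fintype.card q) * (A * B).charpoly
      = Polynomial.X ^ (Fintype.card p) * (B * A).charpoly := by
  apply Polynomial.eq_of_infinite_eval_eq
  apply Set.Infinite.mono (s := {(0:ℂ)}ᶜ)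
  swap
  · exact Set.Finite.infinite_compl (Set.finite_singleton 0)
  intro z hz
  have hz' : (z : ℂ) ≠ 0 := hz
  simp only [Set.mem_setOf_eq, Polynomial.eval_mul, Polynomial.eval_pow, Polynomial.eval_X]
  rw [eval_charpoly', eval_charpoly']
  have key : (1 : Matrix p p ℂ) - (z⁻¹ • A) * B
      = (1 : Matrix p p ℂ) + (-(z⁻¹ • A)) * B := by rw [Matrix.neg_mul, sub_eq_add_neg]
  have e1 : z • (1 : Matrix p p ℂ) - A * B = z • ((1 : Matrix p p ℂ) - (z⁻¹ • A) * B) := by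
    rw [smul_sub]
    congr 1
    rw [Matrix.smul_mul, smul_smul, mul_inv_cancel₀ hz', one_smul]
  have e2 : z • (1 : Matrix q q ℂ) - B * A = z • ((1 : Matrix q q ℂ) - B * (z⁻¹ • A)) := by
    rw [smul_sub]
    congr 1
    rw [Matrix.mul_smul, smul_smul, mul_inv_cancel₀ hz', one_smul]
  have e3 : ((1 : Matrix p p ℂ) - (z⁻¹ • A) * B).det
      = ((1 : Matrix q q ℂ) - B * (z⁻¹ • A)).det := by
    have := Matrix.det_one_add_mul_comm (-(z⁻¹ • A)) B
    rw [Matrix.neg_mul, Matrix.mul_neg, ← sub_eq_add_neg, ← sub_eq_add_neg] at this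
    exact this
  rw [e1, e2, Matrix.det_smul, Matrix.det_smul, e3]
  ring

lemma vnEntropy_eq_entS {n : Type*} [Fintype n] [DecidableEq n] {H : Matrix n n ℂ}
    (h : H.IsHermitian) : vnEntropy H = entS H.charpoly := by
  classical
  set U : Matrix n n ℂ := (Matrix.IsHermitian.eigenvectorUnitary h : Matrix n n ℂ) with hUdef
  have hU : U * star U = 1 :=
    Matrix.mem_unitaryGroup_iff.mp (Matrix.IsHermitian.eigenvectorUnitary h).2
  set D : Matrix n n ℂ := Matrix.diagonal (RCLike.ofReal ∘ h.eigenvalues) with hDdef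
  have hspec : H = U * D * star U := h.spectral_theorem
  have hcp : H.charpoly = D.charpoly := by
    apply Polynomial.funext; intro z
    rw [eval_charpoly', eval_charpoly']
    have e0 : U * (z • (1 : Matrix n n ℂ)) * star U = z • (1 : Matrix n n ℂ) := by
      rw [mul_smul_comm, Matrix.smul_mul, mul_one, hU]
    have e1 : z • (1 : Matrix n n ℂ) - H = U * (z • (1 : Matrix n n ℂ) - D) * star U := by
      rw [Matrix.mul_sub, Matrix.sub_mul, e0, hspec]
    rw [e1, Matrix.det_mul, Matrix.det_mul]
    have h2 : U.det * (star U).det = 1 := by rw [← Matrix.det_mul, hU, Matrix.det_one]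
    calc U.det * (z • (1 : Matrix n n ℂ) - D).det * (star U).det
        = (U.det * (star U).det) * (z • (1 : Matrix n n ℂ) - D).det := by ring
      _ = (z • (1 : Matrix n n ℂ) - D).det := by rw [h2, one_mul]
  have hdiag : D.charpoly
      = ((Multiset.map (fun i => ((h.eigenvalues i : ℝ) : ℂ)) Finset.univ.val).map
          (fun a => Polynomial.X - Polynomial.C a)).prod := by
    rw [Matrix.charpoly]
    have hc : D.charmatrix
        = Matrix.diagonal (fun i => Polynomial.X - Polynomial.C ((h.eigenvalues i : ℝ) : ℂ)) := by
      ext i j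
      by_cases hij : i = j <;>
        simp [hij, Matrix.charmatrix_apply, Matrix.diagonal_apply, hDdef]
    rw [hc, Matrix.det_diagonal, Multiset.map_map, ← Finset.prod_eq_multiset_prod]
    rfl
  have hroots : H.charpoly.roots
      = Multiset.map (fun i => ((h.eigenvalues i : ℝ) : ℂ)) Finset.univ.val := by
    rw [hcp, hdiag, Polynomial.roots_multiset_prod_X_sub_C]
  unfold vnEntropy entS
  rw [dif_pos h, hroots, Multiset.map_map, ← Finset.sum_eq_multiset_sum]
  simp

lemma vnEntropy_AAh_eq_AhA {p q : Type*} [Fintype p] [Fintype q] [DecidableEq p] [DecidableEq q]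
    (A : Matrix p q ℂ) : vnEntropy (A * Aᴴ) = vnEntropy (Aᴴ * A) := by
  rw [vnEntropy_eq_entS (Matrix.isHermitian_mul_conjTranspose_self A),
    vnEntropy_eq_entS (Matrix.isHermitian_conjTranspose_mul_self A),
    ← entS_X_pow_mul (Fintype.card q) (Matrix.charpoly_monic _).ne_zero,
    charpoly_swap A Aᴴ, entS_X_pow_mul _ (Matrix.charpoly_monic _).ne_zero]

lemma vnEntropy_transpose {n : Type*} [Fintype n] [DecidableEq n] {M : Matrix n n ℂ}
    (h : M.IsHermitian) : vnEntropy Mᵀ = vnEntropy M := by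
  rw [vnEntropy_eq_entS h.transpose, vnEntropy_eq_entS h, charpoly_transpose']

lemma main_eq {a b m : ℕ} (φ : Fin a × Fin b → ℂ) (φs : Fin m → Fin a → ℂ)
    (hsum : (∑ x, proj (φs x)) = 1) :
    mutualInfo (measureA (fun x => proj (φs x)) (proj φ)) = vnEntropy (ptraceSnd (proj φ)) := by
  classical
  set M : Matrix (Fin a) (Fin b) ℂ := Matrix.of (fun i j => φ (i, j)) with hM
  set ψ : Fin m → Fin b → ℂ := fun x i => ∑ l, (starRingEnd ℂ) (φs x l) * φ (l, i) with hψ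
  set K : Matrix (Fin m × Fin b) (Fin m) ℂ :=
    Matrix.of (fun p y => if p.1 = y then ψ p.1 p.2 else 0) with hK
  have hA : ptraceSnd (proj φ) = M * Mᴴ := by
    ext i j
    simp [ptraceSnd, proj, Matrix.vecMulVec_apply, Matrix.mul_apply,
      Matrix.conjTranspose_apply, hM]
  have hB : ptraceFst (proj φ) = (Mᴴ * M)ᵀ := by
    ext i j
    simp [ptraceFst, proj, Matrix.vecMulVec_apply, Matrix.mul_apply,
      Matrix.conjTranspose_apply, hM, mul_comm]
  have hXB : measureA (fun x => proj (φs x)) (proj φ) = K * Kᴴ := by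
    ext ⟨x, i⟩ ⟨y, j⟩
    simp only [measureA, proj, Matrix.vecMulVec_apply, Matrix.mul_apply,
      Matrix.conjTranspose_apply, Matrix.of_apply, hK]
    by_cases hxy : x = y
    · subst hxy
      have hterm : ∀ z : Fin m,
          (if x = z then ψ x i else 0) * star (if x = z then ψ x j else 0)
            = if x = z then ψ x i * star (ψ x j) else 0 := by
        intro z; split <;> simp
      rw [Finset.sum_congr rfl fun z _ => hterm z, Finset.sum_ite_eq Finset.univ x]
      simp only [Finset.mem_univ, if_true]
      have hstar : star (ψ x j) = ∑ k, φs x k * star (φ (k, j)) := by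
        simp only [hψ, star_sum, star_mul', RingHomCompTriple.comp_apply, Complex.star_def,
          Complex.conj_conj, RingHom.id_apply]
      rw [hstar, hψ]
      rw [Finset.sum_mul_sum, Finset.sum_comm]
      refine Finset.sum_congr rfl fun k _ => Finset.sum_congr rfl fun l _ => ?_
      simp only [Pi.star_apply, Complex.star_def]
      ring
    · rw [if_neg hxy]
      symm
      apply Finset.sum_eq_zero
      intro z _
      rcases eq_or_ne x z with rfl | hxz
      · rw [if_neg (show ¬ y = x from fun h => hxy h.symm), star_zero, mul_zero]
      · rw [if_neg hxz, zero_mul]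
  have collapse : ∀ (u v : Fin m → ℂ) (x y : Fin m),
      (∑ z, (if x = z then u z else 0) * (if y = z then v z else 0))
        = if x = y then u x * v x else 0 := by
    intro u v x y
    have h1 : ∀ z, (if x = z then u z else 0) * (if y = z then v z else 0)
        = if x = z then (if y = z then u z * v z else 0) else 0 := by
      intro z; split_ifs <;> simp
    rw [Finset.sum_congr rfl fun z _ => h1 z, Finset.sum_ite_eq Finset.univ x]
    simp only [Finset.mem_univ, if_true]
    by_cases hxy : x = y
    · subst hxy; simp
    · rw [if_neg (fun h => hxy h.symm), if_neg hxy]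
  have collapse' : ∀ (u v : Fin m → ℂ) (x y : Fin m),
      (∑ z, (if z = x then u z else 0) * (if z = y then v z else 0))
        = if x = y then u x * v x else 0 := by
    intro u v x y
    rw [← collapse u v x y]
    refine Finset.sum_congr rfl fun z _ => ?_
    congr 1 <;> simp [eq_comm]
  have hX : ptraceSnd (K * Kᴴ) = Kᴴ * K := by
    ext x y
    simp only [ptraceSnd, Matrix.mul_apply, Matrix.conjTranspose_apply, Matrix.of_apply, hK,
      Fintype.sum_prod_type]
    calc (∑ i : Fin b, ∑ z : Fin m,
            (if x = z then ψ x i else 0) * star (if y = z then ψ y i else 0))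
        = ∑ i : Fin b, if x = y then ψ x i * star (ψ y i) else 0 := by
          refine Finset.sum_congr rfl fun i _ => ?_
          rw [← collapse (fun _ => ψ x i) (fun _ => star (ψ y i)) x y]
          refine Finset.sum_congr rfl fun z _ => ?_
          congr 1
          split_ifs <;> simp
      _ = ∑ i : Fin b, ∑ z : Fin m,
            star (if z = x then ψ z i else 0) * (if z = y then ψ z i else 0) := by
          refine Finset.sum_congr rfl fun i _ => ?_
          have h2 : ∀ z : Fin m, star (if z = x then ψ z i else 0) * (if z = y then ψ z i else 0)
              = (if z = x then star (ψ z i) else 0) * (if z = y then ψ z i else 0) := by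
            intro z; split_ifs <;> simp
          rw [Finset.sum_congr rfl fun z _ => h2 z,
            collapse' (fun z => star (ψ z i)) (fun z => ψ z i) x y]
          by_cases hxy : x = y
          · subst hxy; simp [mul_comm]
          · simp [hxy]
      _ = _ := Finset.sum_comm
  have hBeq : ptraceFst (measureA (fun x => proj (φs x)) (proj φ)) = ptraceFst (proj φ) := by
    ext i j
    simp only [ptraceFst, measureA, Matrix.of_apply, if_pos rfl, ite_true]
    calc (∑ x, ∑ k, ∑ l, (proj (φs x)) k l * (proj φ) (l, i) (k, j))
        = ∑ k, ∑ l, (∑ x, (proj (φs x)) k l) * (proj φ) (l, i) (k, j) := by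
          rw [Finset.sum_comm]
          refine Finset.sum_congr rfl fun k _ => ?_
          rw [Finset.sum_comm]
          exact Finset.sum_congr rfl fun l _ => (Finset.sum_mul _ _ _).symm
      _ = ∑ k, ∑ l, ((1 : Matrix (Fin a) (Fin a) ℂ) k l) * (proj φ) (l, i) (k, j) := by
          refine Finset.sum_congr rfl fun k _ => Finset.sum_congr rfl fun l _ => ?_
          rw [← Matrix.sum_apply, hsum]
      _ = ∑ k, (proj φ) (k, i) (k, j) := by
          refine Finset.sum_congr rfl fun k _ => ?_
          simp [Matrix.one_apply, eq_comm]
  unfold mutualInfo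
  rw [hBeq, hXB, hX, vnEntropy_AAh_eq_AhA K, add_sub_cancel_left, hB, hA,
    vnEntropy_transpose (Matrix.isHermitian_conjTranspose_mul_self M),
    ← vnEntropy_AAh_eq_AhA M]

theorem dcr_of_pure_state {a b : ℕ} (φ : Fin a × Fin b → ℂ) (hφ : star φ ⬝ᵥ φ = 1) :
    IsGreatest {r : ℝ | ∃ (m : ℕ) (φs : Fin m → Fin a → ℂ),
        (∑ x, proj (φs x)) = 1 ∧
        r = mutualInfo (measureA (fun x => proj (φs x)) (proj φ))}
      (vnEntropy (ptraceSnd (proj φ))) := by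
  classical
  have hpovm : (∑ x : Fin a, proj (fun l : Fin a => if l = x then (1 : ℂ) else 0)) = 1 := by
    ext k l
    rw [Matrix.sum_apply]
    have h1 : ∀ x : Fin a,
        (proj (fun l : Fin a => if l = x then (1 : ℂ) else 0)) k l
          = if k = x then (if l = x then (1 : ℂ) else 0) else 0 := by
      intro x
      simp only [proj, Matrix.vecMulVec_apply, Pi.star_apply]
      split_ifs <;> simp_all
    rw [Finset.sum_congr rfl fun x _ => h1 x, Finset.sum_ite_eq Finset.univ k]
    simp [Matrix.one_apply, eq_comm]
  constructor
  · exact ⟨a, fun x l => if l = x then 1 else 0, hpovm, (main_eq φ _ hpovm).symm⟩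
  · rintro r ⟨m, φs, hsum, rfl⟩
    exact (main_eq φ φs hsum).le
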